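/- Let k have characteristic 3 and let V be a 2-dimensional k-vector space with a nonzero alternating form ⟨·|·⟩. Define B(1,2) = k1 ⊕ V with even part k1, odd part V, multiplication 1x = x1 = x and uv = ⟨u|v⟩1 for u,v ∈ V, and quadratic superform q = (q₀, b) with q₀(λ1) = λ², b(u,v) = ⟨u|v⟩ for u,v ∈ V, b(1,1)=2, b(1,V)=0. Then B(1,2) is a composition superalgebra: the identities b(x₀y, x₀z) = q₀(x₀)b(y,z) = b(yx₀, zx₀) and b(xy,zt) + (−1)^{|x||y|+|x||z|+|y||z|} b(zy,xt) = (−1)^{|y||z|} b(x,z)b(y,t) hold for all homogeneous elements. -/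
import Mathlib


section

variable {k V : Type*} [Field k] [AddCommGroup V] [Module k V]

/-- The multiplication of `B(1,2) = k1 ⊕ V` : `1x = x1 = x` and `uv = ⟨u|v⟩1`. -/
noncomputable def b12mul (B : LinearMap.BilinForm k V) (x y : k × V) : k × V :=
  (x.1 * y.1 + B x.2 y.2, x.1 • y.2 + y.1 • x.2)

/-- The bilinear form of the norm of `B(1,2)` : `b(1,1) = 2`, `b(1,V) = 0`,
`b(u,v) = ⟨u|v⟩`. -/
noncomputable def b12form (B : LinearMap.BilinForm k V) (x y : k × V) : k :=
  2 * x.1 * y.1 + B x.2 y.2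

/-- `x` is homogeneous of parity `p` in `B(1,2) = k1 ⊕ V`. -/
def b12homog (p : ZMod 2) (x : k × V) : Prop :=
  (p = 0 ∧ x.2 = 0) ∨ (p = 1 ∧ x.1 = 0)

end


lemma plucker {k V : Type*} [Field k] [AddCommGroup V] [Module k V]
    (hdim : Module.finrank k V = 2)
    (B : LinearMap.BilinForm k V) (halt : B.IsAlt) (u v w s : V) :
    B u v * B w s + B v w * B u s + B w u * B v s = 0 := by
  have hskew : ∀ a b : V, B a b = - B b a := fun a b => by
    have := LinearMap.IsAlt.neg halt b a; linear_combination -this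
  by_cases hi : LinearIndependent k ![u, v]
  · have hcard : Fintype.card (Fin 2) = Module.finrank k V := by simp [hdim]
    set bb := basisOfLinearIndependentOfCardEqFinrank hi hcard with hbb
    have hw : w = bb.repr w 0 • u + bb.repr w 1 • v := by
      have h := bb.sum_repr w
      rw [Fin.sum_univ_two] at h
      have h0 : bb 0 = u := by rw [hbb, coe_basisOfLinearIndependentOfCardEqFinrank]; rfl
      have h1 : bb 1 = v := by rw [hbb, coe_basisOfLinearIndependentOfCardEqFinrank]; rfl
      rw [h0, h1] at h
      exact h.symm
    rw [hw]
    simp only [map_add, map_smul, LinearMap.add_apply, LinearMap.smul_apply, smul_eq_mul]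
    have h1 := halt u
    have h2 := halt v
    have h3 := hskew u v
    linear_combination (bb.repr w 0 * B u s) * h3 + (bb.repr w 1 * B v s) * h3
      + (bb.repr w 0 * B v s) * h1 + (bb.repr w 1 * B u s) * h2
  · rw [linearIndependent_fin2] at hi
    push_neg at hi
    rcases eq_or_ne (![u, v] 1) 0 with h | h
    · have hv : v = 0 := h
      subst hv
      simp [halt u, hskew w u]
    · obtain ⟨a, ha⟩ := hi h
      have hu : u = a • v := ha.symm
      subst hu
      simp only [map_smul, LinearMap.smul_apply, smul_eq_mul]
      have h1 := halt v
      have h2 := hskew v w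
      linear_combination (a * B w s) * h1 + a * B v s * h2


/-- In characteristic 3, `B(1,2)` is a composition superalgebra: the norm is
multiplicative on the even part, `b(x₀y, x₀z) = q₀(x₀)b(y,z) = b(yx₀, zx₀)`, and
`b(xy,zt) + (−1)^{|x||y|+|x||z|+|y||z|} b(zy,xt) = (−1)^{|y||z|} b(x,z)b(y,t)`
for all homogeneous elements. -/
theorem stmt4 (k : Type*) [Field k] [CharP k 3]
    (V : Type*) [AddCommGroup V] [Module k V]
    (hdim : Module.finrank k V = 2)
    (B : LinearMap.BilinForm k V) (halt : B.IsAlt) (hne : B ≠ 0) :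
    (∀ a c : k, (a * c) ^ 2 = a ^ 2 * c ^ 2) ∧
    (∀ (a : k) (y z : k × V),
      b12form B (b12mul B (a, 0) y) (b12mul B (a, 0) z) = a ^ 2 * b12form B y z ∧
      b12form B (b12mul B y (a, 0)) (b12mul B z (a, 0)) = a ^ 2 * b12form B y z) ∧
    (∀ (px py pz pt : ZMod 2) (x y z t : k × V),
      b12homog px x → b12homog py y → b12homog pz z → b12homog pt t →
      b12form B (b12mul B x y) (b12mul B z t)
        + ((-1 : k) ^ (px.val * py.val + px.val * pz.val + py.val * pz.val)) *
            b12form B (b12mul B z y) (b12mul B x t)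
      = ((-1 : k) ^ (py.val * pz.val)) * (b12form B x z * b12form B y t)) := by
  have h3 : (3 : k) = 0 := CharP.cast_eq_zero k 3
  have hskew : ∀ a b : V, B a b = - B b a := fun a b => by
    have := LinearMap.IsAlt.neg halt b a; linear_combination -this
  refine ⟨fun a c => by ring, fun a y z => ?_, ?_⟩
  · obtain ⟨y1, y2⟩ := y
    obtain ⟨z1, z2⟩ := z
    constructor <;>
      simp only [b12mul, b12form, map_zero, map_add, map_smul, LinearMap.add_apply,
        LinearMap.smul_apply, LinearMap.zero_apply, smul_eq_mul, smul_zero, zero_smul,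
        add_zero, zero_add, mul_zero, zero_mul] <;> ring
  · intro px py pz pt x y z t hhx hhy hhz hht
    obtain ⟨x1, x2⟩ := x
    obtain ⟨y1, y2⟩ := y
    obtain ⟨z1, z2⟩ := z
    obtain ⟨t1, t2⟩ := t
    have h0v : ((0 : ZMod 2)).val = 0 := rfl
    have h1v : ((1 : ZMod 2)).val = 1 := rfl
    rcases hhx with ⟨hpx, hx⟩ | ⟨hpx, hx⟩ <;>
      rcases hhy with ⟨hpy, hy⟩ | ⟨hpy, hy⟩ <;>
      rcases hhz with ⟨hpz, hz⟩ | ⟨hpz, hz⟩ <;>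
      rcases hht with ⟨hpt, ht⟩ | ⟨hpt, ht⟩ <;>
      simp only at hx hy hz ht <;>
      subst hpx hpy hpz hpt hx hy hz ht <;>
      simp only [b12mul, b12form, h0v, h1v, map_zero, map_add, map_smul, LinearMap.add_apply,
        LinearMap.smul_apply, LinearMap.zero_apply, smul_eq_mul, smul_zero, zero_smul,
        add_zero, zero_add, mul_zero, zero_mul, mul_one, mul_zero] <;>
      norm_num
    · ring
    · linear_combination x1 * y1 * (B z2 t2) * h3
    · ring
    · linear_combination x1 * t1 * (B y2 z2) * h3 - 2 * x1 * t1 * (hskew z2 y2)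
    · linear_combination y1 * z1 * (B x2 t2) * h3
    · linear_combination -t1 * y1 * (hskew z2 x2)
    · linear_combination z1 * t1 * (B x2 y2) * h3 - z1 * t1 * (hskew y2 x2)
    · linear_combination (B x2 y2 * B z2 t2 - B z2 y2 * B x2 t2) * h3
        - plucker hdim B halt x2 y2 z2 t2 + B x2 t2 * hskew z2 y2 + B y2 t2 * hskew x2 z2
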